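/- Gordan's Lemma: For any real matrix A (with rows a_1, ..., a_m in ℝ^k), exactly one of the following holds: (1) there exists a nonzero vector x ∈ ℝ^m with nonnegative entries such that xᵀA = 0, or (2) there exists a vector y ∈ ℝ^k such that a_i · y < 0 for every row a_i. -/

import Mathlib

theorem stmt_2 {m k : ℕ} (a : Fin m → Fin k → ℝ) :
    Xor' (∃ x : Fin m → ℝ, (∀ i, 0 ≤ x i) ∧ x ≠ 0 ∧ ∀ t, ∑ i, x i * a i t = 0)
      (∃ y : Fin k → ℝ, ∀ i, ∑ t, a i t * y t < 0) := by
  have hnot : ¬ ((∃ x : Fin m → ℝ, (∀ i, 0 ≤ x i) ∧ x ≠ 0 ∧ ∀ t, ∑ i, x i * a i t = 0) ∧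
      (∃ y : Fin k → ℝ, ∀ i, ∑ t, a i t * y t < 0)) := by
    rintro ⟨⟨x, hx0, hxne, hxA⟩, ⟨y, hy⟩⟩
    have hsum : ∑ i, x i * ∑ t, a i t * y t = 0 := by
      have h1 : ∑ i, x i * ∑ t, a i t * y t = ∑ t, (∑ i, x i * a i t) * y t := by
        simp_rw [Finset.mul_sum, Finset.sum_mul, ← mul_assoc]
        exact Finset.sum_comm
      rw [h1]
      simp [hxA]
    obtain ⟨i0, hi0⟩ : ∃ i, x i ≠ 0 := by
      by_contra h
      push_neg at h
      exact hxne (funext h)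
    have hi0' : 0 < x i0 := lt_of_le_of_ne (hx0 i0) (Ne.symm hi0)
    have hneg : ∑ i, x i * ∑ t, a i t * y t < 0 := by
      apply Finset.sum_neg' (fun i _ => mul_nonpos_of_nonneg_of_nonpos (hx0 i) (hy i).le)
      exact ⟨i0, Finset.mem_univ i0, mul_neg_of_pos_of_neg hi0' (hy i0)⟩
    exact absurd hsum hneg.ne
  rcases em (0 ∈ convexHull ℝ (Set.range a)) with hmem | hmem
  · have hP : ∃ x : Fin m → ℝ, (∀ i, 0 ≤ x i) ∧ x ≠ 0 ∧ ∀ t, ∑ i, x i * a i t = 0 := by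
      rw [convexHull_range_eq_exists_affineCombination] at hmem
      obtain ⟨s, w, hw0, hw1, hws⟩ := hmem
      rw [Finset.affineCombination_eq_linear_combination s a w hw1] at hws
      set x : Fin m → ℝ := fun i => if i ∈ s then w i else 0 with hxdef
      have hx0 : ∀ i, 0 ≤ x i := by
        intro i
        by_cases h : i ∈ s <;> simp [hxdef, h, hw0 i]
      have hrestr : ∀ (f : Fin m → ℝ), ∑ i, x i * f i = ∑ i ∈ s, w i * f i := by
        intro f
        rw [← Finset.sum_subset (Finset.subset_univ s)
          (fun i _ hi => by simp [hxdef, hi])]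
        exact Finset.sum_congr rfl fun i hi => by simp [hxdef, hi]
      have hxsum : ∑ i, x i = 1 := by
        have := hrestr (fun _ => 1)
        simpa [hw1] using this
      refine ⟨x, hx0, ?_, ?_⟩
      · intro h
        rw [h] at hxsum
        simp at hxsum
      · intro t
        rw [hrestr (fun i => a i t)]
        have ht := congrFun hws t
        simpa using ht
    exact Or.inl ⟨hP, fun hq => hnot ⟨hP, hq⟩⟩
  · have hQ : ∃ y : Fin k → ℝ, ∀ i, ∑ t, a i t * y t < 0 := by
      have hconv : Convex ℝ (convexHull ℝ (Set.range a)) := convex_convexHull ℝ _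
      have hclosed : IsClosed (convexHull ℝ (Set.range a)) :=
        (Set.finite_range a).isClosed_convexHull (𝕜 := ℝ)
      obtain ⟨f, u, hfu, hu0⟩ := geometric_hahn_banach_closed_point hconv hclosed hmem
      rw [map_zero] at hu0
      refine ⟨fun t => f (Pi.single t 1), fun i => ?_⟩
      have hrep : a i = ∑ t, a i t • (Pi.single t 1 : Fin k → ℝ) := by
        ext s
        simp [Pi.single_apply, eq_comm]
      have hfa : f (a i) = ∑ t, a i t * f (Pi.single t 1) := by
        conv_lhs => rw [hrep]
        rw [map_sum]
        simp [smul_eq_mul]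
      rw [← hfa]
      exact lt_trans (hfu _ (subset_convexHull ℝ _ (Set.mem_range_self i))) hu0
    exact Or.inr ⟨hQ, fun hp => hnot ⟨hp, hQ⟩⟩
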